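/- arXiv:1404.4214 — 3 statements merged into one kernel-verified Lean document; each statement's English description precedes it below -/
import Mathlib

section
/- Let k = 4m with m ≥ 1 and n an odd integer. Then for every ν ≥ 1, the number of solutions of x_1²+...+x_k² ≡ n (mod 2^ν) equals 2^{ν(4m-1)}. -/
namespace CountSq
open Finset

def L (ν : ℕ) (x : ZMod (2^ν)) : ZMod (2^(ν+1)) := ((x.val : ℕ) : ZMod (2^(ν+1)))

instance (ν : ℕ) : NeZero ((2:ℕ)^ν) := ⟨pow_ne_zero _ two_ne_zero⟩

lemma two_pow_dvd (ν : ℕ) : (2:ℕ)^ν ∣ 2^(ν+1) := pow_dvd_pow 2 (Nat.le_succ ν)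

def down (ν : ℕ) : ZMod (2^(ν+1)) →+* ZMod (2^ν) := ZMod.castHom (two_pow_dvd ν) _

lemma h0 (ν : ℕ) : (2 : ZMod (2^(ν+1)))^(ν+1) = 0 := by
  have := ZMod.natCast_self (2^(ν+1)); push_cast at this; exact this

lemma shift_sq {ν : ℕ} (hν : 1 ≤ ν) (a b : ZMod (2^(ν+1))) : (a + 2^ν*b)^2 = a^2 := by
  have h00 := h0 ν
  have h1 : (2:ZMod (2^(ν+1)))^ν * 2 = 0 := by rw [← pow_succ, h00]
  have h2 : (2:ZMod (2^(ν+1)))^ν * 2^ν = 0 := by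
    have he : ν + ν = (ν+1) + (ν-1) := by omega
    calc (2:ZMod (2^(ν+1)))^ν * 2^ν = 2^(ν+1) * 2^(ν-1) := by rw [← pow_add, ← pow_add, he]
    _ = 0 := by rw [h00, zero_mul]
  linear_combination (a*b)*h1 + (b*b)*h2

lemma down_L (ν : ℕ) (x : ZMod (2^ν)) : down ν (L ν x) = x := by
  simp only [down, L, map_natCast, ZMod.natCast_zmod_val]

lemma ker_down {ν : ℕ} (z : ZMod (2^(ν+1))) (h : down ν z = 0) : z = 0 ∨ z = 2^ν := by
  have hz : ((z.val : ℕ) : ZMod (2^(ν+1))) = z := ZMod.natCast_zmod_val z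
  rw [← hz, down, map_natCast, ZMod.natCast_eq_zero_iff] at h
  have hlt : z.val < 2^(ν+1) := ZMod.val_lt z
  obtain ⟨c, hc⟩ := h
  have : c = 0 ∨ c = 1 := by
    rcases Nat.lt_or_ge c 2 with h | h
    · omega
    · exfalso; have : 2^ν * 2 ≤ 2^ν * c := Nat.mul_le_mul_left _ h
      rw [← pow_succ] at this; omega
  rcases this with rfl | rfl
  · left; rw [← hz, hc]; simp
  · right; rw [← hz, hc]; push_cast; ring

lemma sq_eq_L_down_sq {ν : ℕ} (hν : 1 ≤ ν) (y : ZMod (2^(ν+1))) :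
    y^2 = (L ν (down ν y))^2 := by
  have h : down ν (y - L ν (down ν y)) = 0 := by
    rw [map_sub, down_L, sub_self]
  rcases ker_down _ h with h' | h'
  · have hy : y = L ν (down ν y) := by linear_combination h'
    conv_lhs => rw [hy]
  · have hy : y = L ν (down ν y) + 2^ν * 1 := by linear_combination h'
    conv_lhs => rw [hy]
    exact shift_sq hν _ _

lemma twoPow_mul_odd (ν : ℕ) (S : ℕ) (hS : Odd S) :
    (2:ZMod (2^(ν+1)))^ν * (S : ZMod (2^(ν+1))) = 2^ν := by
  have h1 : (2:ZMod (2^(ν+1)))^ν * 2 = 0 := by rw [← pow_succ, h0]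
  obtain ⟨s, rfl⟩ := hS
  push_cast
  linear_combination (s : ZMod (2^(ν+1))) * h1

lemma L_add_sq {ν : ℕ} (hν : 1 ≤ ν) (a : ZMod (2^ν)) :
    (L ν (a + ((2^(ν-1) : ℕ) : ZMod (2^ν))))^2 = (L ν a + ((2^(ν-1):ℕ) : ZMod (2^(ν+1))))^2 := by
  have key := sq_eq_L_down_sq hν (L ν a + ((2^(ν-1):ℕ) : ZMod (2^(ν+1))))
  rw [map_add, down_L, map_natCast] at key
  exact key.symm

lemma Lsq_pair {ν : ℕ} (hν : 1 ≤ ν) (a b : ZMod (2^ν))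
    (h : Odd (a.val + b.val + 2^(ν-1))) :
    (L ν (a + ((2^(ν-1) : ℕ) : ZMod (2^ν))))^2 + (L ν (b + ((2^(ν-1) : ℕ) : ZMod (2^ν))))^2
      = (L ν a)^2 + (L ν b)^2 + 2^ν := by
  obtain ⟨w, rfl⟩ : ∃ w, ν = w + 1 := ⟨ν - 1, by omega⟩
  have ha := L_add_sq hν a
  have hb := L_add_sq hν b
  simp only [Nat.add_sub_cancel] at h ha hb ⊢
  have key := twoPow_mul_odd (w+1) _ h
  rw [ha, hb]
  simp only [L]
  push_cast at key ⊢
  linear_combination key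

lemma L_down_cases {ν : ℕ} (y : ZMod (2^(ν+1))) :
    y = L ν (down ν y) ∨ y = L ν (down ν y) + 2^ν := by
  have h : down ν (y - L ν (down ν y)) = 0 := by rw [map_sub, down_L, sub_self]
  rcases ker_down _ h with h' | h'
  · left; linear_combination h'
  · right; linear_combination h'

lemma two_pow_ne_zero_big (ν : ℕ) : (2 : ZMod (2^(ν+1)))^ν ≠ 0 := by
  have : (((2:ℕ)^ν : ℕ) : ZMod (2^(ν+1))) ≠ 0 := by
    rw [Ne, ZMod.natCast_eq_zero_iff]
    intro hd
    have := Nat.le_of_dvd (by positivity) hd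
    have h2 : (2:ℕ)^ν < 2^(ν+1) := Nat.pow_lt_pow_right one_lt_two (Nat.lt_succ_self ν)
    omega
  push_cast at this; exact this

def Tc (m ν : ℕ) (n : ℤ) (x : Fin (4*m) → ZMod (2^ν)) : Prop :=
  ∑ i, (L ν (x i))^2 = (n : ZMod (2^(ν+1)))

lemma small_two_pow (ν : ℕ) : (2:ZMod (2^ν))^ν = 0 := by
  have := ZMod.natCast_self (2^ν); push_cast at this; exact_mod_cast this

lemma down_two_pow (ν : ℕ) : down ν ((2:ZMod (2^(ν+1)))^ν) = 0 := by
  rw [map_pow, map_ofNat]; exact small_two_pow ν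

lemma step_a {ν : ℕ} (hν : 1 ≤ ν) (m : ℕ) (n : ℤ) :
    Nat.card {y : Fin (4*m) → ZMod (2^(ν+1)) // ∑ i, (y i)^2 = (n : ZMod (2^(ν+1)))}
      = 2^(4*m) * Nat.card {x : Fin (4*m) → ZMod (2^ν) // Tc m ν n x} := by
  classical
  have e : {y : Fin (4*m) → ZMod (2^(ν+1)) // ∑ i, (y i)^2 = (n : ZMod (2^(ν+1)))}
      ≃ {x : Fin (4*m) → ZMod (2^ν) // Tc m ν n x} × (Fin (4*m) → Bool) :=
  { toFun := fun y => (⟨fun i => down ν (y.1 i),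
      (Finset.sum_congr rfl fun i _ => (sq_eq_L_down_sq hν (y.1 i)).symm).trans y.2⟩,
      fun i => decide (y.1 i ≠ L ν (down ν (y.1 i))))
    invFun := fun p => ⟨fun i => L ν (p.1.1 i) + if p.2 i then 2^ν else 0, by
      have key : ∀ i, (L ν (p.1.1 i) + if p.2 i then (2:ZMod (2^(ν+1)))^ν else 0)^2
          = (L ν (p.1.1 i))^2 := by
        intro i
        cases hpi : p.2 i
        · simp
        · simp only [if_true]
          simpa using shift_sq hν (L ν (p.1.1 i)) 1
      exact (Finset.sum_congr rfl fun i _ => key i).trans p.1.2⟩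
    left_inv := fun y => by
      apply Subtype.ext
      funext i
      dsimp only
      rcases L_down_cases (y.1 i) with h | h
      · simp only [decide_eq_false (not_ne_iff.mpr h)]
        simpa using h.symm
      · simp only [decide_eq_true (show y.1 i ≠ L ν (down ν (y.1 i)) from
          fun hc => two_pow_ne_zero_big ν (by linear_combination (h.symm.trans hc)))]
        simpa using h.symm
    right_inv := fun p => by
      have hdown : ∀ i, down ν (L ν (p.1.1 i) + if p.2 i then (2:ZMod (2^(ν+1)))^ν else 0)
          = p.1.1 i := by
        intro i
        rw [map_add, down_L]
        cases hpi : p.2 i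
        · simp
        · simp only [if_true, down_two_pow, add_zero]
      refine Prod.ext (Subtype.ext (funext fun i => hdown i)) (funext fun i => ?_)
      dsimp only
      rw [hdown i]
      rcases (Bool.eq_false_or_eq_true (p.2 i)).symm with hpi | hpi <;> simp only [hpi]
      · simp
      · simp only [if_true]
        rw [decide_eq_true (show L ν (p.1.1 i) + 2^ν ≠ L ν (p.1.1 i) from
          fun hc => two_pow_ne_zero_big ν (by linear_combination hc))]
  }
  rw [Nat.card_congr e, Nat.card_prod]
  have hb : Nat.card (Fin (4*m) → Bool) = 2^(4*m) := by
    simp [Nat.card_eq_fintype_card]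
  rw [hb, mul_comm]

lemma step_b {ν : ℕ} (hν : 1 ≤ ν) (m : ℕ) (n : ℤ) :
    Nat.card {x : Fin (4*m) → ZMod (2^ν) // ∑ i, (x i)^2 = (n : ZMod (2^ν))} =
      Nat.card {x : Fin (4*m) → ZMod (2^ν) // Tc m ν n x}
        + Nat.card {x : Fin (4*m) → ZMod (2^ν) // Tc m ν (n + 2^ν) x} := by
  classical
  have hdown : ∀ x : Fin (4*m) → ZMod (2^ν),
      down ν (∑ i, (L ν (x i))^2) = ∑ i, (x i)^2 := by
    intro x
    rw [map_sum]
    exact Finset.sum_congr rfl fun i _ => by rw [map_pow, down_L]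
  have key : ∀ x : Fin (4*m) → ZMod (2^ν),
      (∑ i, (x i)^2 = (n : ZMod (2^ν))) ↔ (Tc m ν n x ∨ Tc m ν (n + 2^ν) x) := by
    intro x
    constructor
    · intro hx
      have h : down ν (∑ i, (L ν (x i))^2 - (n : ZMod (2^(ν+1)))) = 0 := by
        rw [map_sub, hdown, map_intCast, hx, sub_self]
      rcases ker_down _ h with h' | h'
      · left; unfold Tc; linear_combination h'
      · right; unfold Tc; push_cast; linear_combination h'
    · intro hx
      rcases hx with h | h
      · have := congrArg (down ν) h
        rw [hdown, map_intCast] at this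
        exact this
      · have := congrArg (down ν) h
        rw [hdown, map_intCast] at this
        rw [this]
        push_cast
        rw [small_two_pow]
        ring
  have hdisj : Disjoint (fun x : Fin (4*m) → ZMod (2^ν) => Tc m ν n x)
      (fun x => Tc m ν (n + 2^ν) x) := by
    rw [Pi.disjoint_iff]
    intro x
    rw [Prop.disjoint_iff]
    rintro ⟨h1, h2⟩
    unfold Tc at h1 h2
    apply two_pow_ne_zero_big ν
    have : ((n : ZMod (2^(ν+1)))) = ((n + 2^ν : ℤ) : ZMod (2^(ν+1))) := by rw [← h1, ← h2]
    push_cast at this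
    linear_combination -this
  have : Finite {x : Fin (4*m) → ZMod (2^ν) // Tc m ν n x} := Subtype.finite
  have : Finite {x : Fin (4*m) → ZMod (2^ν) // Tc m ν (n + 2^ν) x} := Subtype.finite
  rw [Nat.card_congr ((Equiv.subtypeEquivRight key).trans
    (subtypeOrEquiv _ _ hdisj)), Nat.card_sum]

lemma flip_sum {ν m : ℕ} (hν : 1 ≤ ν) (x : Fin (4*m) → ZMod (2^ν)) (i0 j0 : Fin (4*m))
    (hne : i0 ≠ j0) (hodd : Odd ((x i0).val + (x j0).val + 2^(ν-1))) :
    ∑ i, (L ν (if i = i0 ∨ i = j0 then x i + ((2^(ν-1):ℕ) : ZMod (2^ν)) else x i))^2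
      = ∑ i, (L ν (x i))^2 + 2^ν := by
  classical
  have hmem : j0 ∈ Finset.univ.erase i0 := Finset.mem_erase.mpr ⟨hne.symm, Finset.mem_univ j0⟩
  have h1 : ∀ (F : Fin (4*m) → ZMod (2^(ν+1))),
      ∑ i, F i = F i0 + (F j0 + ∑ i ∈ (Finset.univ.erase i0).erase j0, F i) := by
    intro F
    rw [Finset.add_sum_erase _ F hmem, Finset.add_sum_erase _ F (Finset.mem_univ i0)]
  rw [h1, h1]
  have hrest : ∑ i ∈ (Finset.univ.erase i0).erase j0,
      (L ν (if i = i0 ∨ i = j0 then x i + ((2^(ν-1):ℕ) : ZMod (2^ν)) else x i))^2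
      = ∑ i ∈ (Finset.univ.erase i0).erase j0, (L ν (x i))^2 := by
    apply Finset.sum_congr rfl
    intro i hi
    rw [Finset.mem_erase] at hi
    have hi' := Finset.mem_erase.mp hi.2
    rw [if_neg (by push_neg; exact ⟨hi'.1, hi.1⟩)]
  rw [hrest]
  rw [if_pos (Or.inl rfl), if_pos (Or.inr rfl)]
  have key := Lsq_pair hν (x i0) (x j0) hodd
  linear_combination key

lemma flip_card {ν m : ℕ} (hν : 1 ≤ ν) (n : ℤ)
    (sel : (Fin (4*m) → ZMod (2^ν)) → Fin (4*m) × Fin (4*m))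
    (hne : ∀ x, Tc m ν n x ∨ Tc m ν (n+2^ν) x → (sel x).1 ≠ (sel x).2)
    (hodd : ∀ x, Tc m ν n x ∨ Tc m ν (n+2^ν) x →
        Odd ((x (sel x).1).val + (x (sel x).2).val + 2^(ν-1)))
    (hinv : ∀ x, Tc m ν n x ∨ Tc m ν (n+2^ν) x →
        sel (fun i => if i = (sel x).1 ∨ i = (sel x).2
          then x i + ((2^(ν-1):ℕ) : ZMod (2^ν)) else x i) = sel x) :
    Nat.card {x : Fin (4*m) → ZMod (2^ν) // Tc m ν n x}
      = Nat.card {x : Fin (4*m) → ZMod (2^ν) // Tc m ν (n+2^ν) x} := by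
  classical
  set c : ZMod (2^ν) := ((2^(ν-1):ℕ) : ZMod (2^ν)) with hc
  let fl : (Fin (4*m) → ZMod (2^ν)) → (Fin (4*m) → ZMod (2^ν)) :=
    fun x => fun i => if i = (sel x).1 ∨ i = (sel x).2 then x i + c else x i
  have hstep : ∀ x, Tc m ν n x ∨ Tc m ν (n+2^ν) x →
      ∑ i, (L ν (fl x i))^2 = ∑ i, (L ν (x i))^2 + 2^ν := by
    intro x hx
    exact flip_sum hν x _ _ (hne x hx) (hodd x hx)
  have hcc : c + c = 0 := by
    rw [hc, ← Nat.cast_add]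
    have hs : (2:ℕ)^(ν-1) + 2^(ν-1) = 2^ν := by
      conv_rhs => rw [show ν = ν - 1 + 1 by omega]
      rw [pow_succ]; ring
    rw [hs, ZMod.natCast_self]
  have hff : ∀ x, Tc m ν n x ∨ Tc m ν (n+2^ν) x → fl (fl x) = x := by
    intro x hx
    funext i
    show (if i = (sel (fl x)).1 ∨ i = (sel (fl x)).2 then fl x i + c else fl x i) = x i
    rw [hinv x hx]
    by_cases h : i = (sel x).1 ∨ i = (sel x).2
    · rw [if_pos h]
      show (if i = (sel x).1 ∨ i = (sel x).2 then x i + c else x i) + c = x i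
      rw [if_pos h, add_assoc, hcc, add_zero]
    · rw [if_neg h]
      show (if i = (sel x).1 ∨ i = (sel x).2 then x i + c else x i) = x i
      rw [if_neg h]
  have hfwd : ∀ x, Tc m ν n x → Tc m ν (n+2^ν) (fl x) := by
    intro x hx
    unfold Tc
    rw [hstep x (Or.inl hx), hx]
    push_cast
    ring
  have hbwd : ∀ x, Tc m ν (n+2^ν) x → Tc m ν n (fl x) := by
    intro x hx
    unfold Tc
    rw [hstep x (Or.inr hx), hx]
    have h2 : ((n + 2^ν : ℤ) : ZMod (2^(ν+1))) + 2^ν = (n : ZMod (2^(ν+1))) := by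
      push_cast
      have : (2:ZMod (2^(ν+1)))^ν + 2^ν = 2^(ν+1) := by ring
      linear_combination this + h0 ν
    exact h2
  exact Nat.card_congr
    { toFun := fun x => ⟨fl x.1, hfwd x.1 x.2⟩
      invFun := fun x => ⟨fl x.1, hbwd x.1 x.2⟩
      left_inv := fun x => Subtype.ext (hff x.1 (Or.inl x.2))
      right_inv := fun x => Subtype.ext (hff x.1 (Or.inr x.2)) }

lemma cast_two_eq_one_iff (c : ℕ) : ((c : ZMod 2) = 1) ↔ Odd c := by
  rcases Nat.even_or_odd c with h | h
  · obtain ⟨t, rfl⟩ := h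
    constructor
    · intro hc
      exfalso
      rw [show ((t + t : ℕ) : ZMod 2) = 2 * t by push_cast; ring,
        show (2 : ZMod 2) = 0 by decide, zero_mul] at hc
      exact absurd hc.symm (by decide)
    · intro hodd; rw [Nat.odd_iff] at hodd; omega
  · obtain ⟨t, rfl⟩ := h
    constructor
    · intro _; exact ⟨t, rfl⟩
    · intro _
      rw [show ((2 * t + 1 : ℕ) : ZMod 2) = 2 * t + 1 by push_cast; ring,
        show (2 : ZMod 2) = 0 by decide]
      ring

lemma sum_parity {ν m : ℕ} (hν : 1 ≤ ν) (n : ℤ) (x : Fin (4*m) → ZMod (2^ν))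
    (hx : Tc m ν n x ∨ Tc m ν (n + 2^ν) x) (hn : Odd n) :
    ((∑ i, (x i).val : ℕ) : ZMod 2) = 1 := by
  have hdvd : (2:ℕ) ∣ 2^(ν+1) := dvd_pow_self 2 (Nat.succ_ne_zero ν)
  set d2 : ZMod (2^(ν+1)) →+* ZMod 2 := ZMod.castHom hdvd (ZMod 2) with hd2
  have hsq : ∀ t : ZMod 2, t^2 = t := by decide
  have hL : ∀ i, d2 (L ν (x i)) = (((x i).val : ℕ) : ZMod 2) := fun i => map_natCast d2 _
  have hn2 : ((n : ℤ) : ZMod 2) = 1 := by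
    obtain ⟨t, rfl⟩ := hn
    push_cast
    rw [show (2 : ZMod 2) = 0 by decide]
    ring
  have main : ∀ (N : ℤ), Tc m ν N x → ((N : ℤ) : ZMod 2) = ((∑ i, (x i).val : ℕ) : ZMod 2) := by
    intro N hN
    have := congrArg d2 hN
    rw [map_sum, map_intCast] at this
    rw [← this]
    push_cast
    apply Finset.sum_congr rfl
    intro i _
    rw [map_pow, hL i, hsq]
  rcases hx with h | h
  · rw [← main n h, hn2]
  · rw [← main _ h]
    push_cast
    rw [show (2 : ZMod 2) = 0 by decide, zero_pow (by omega : ν ≠ 0)]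
    obtain ⟨t, rfl⟩ := hn
    push_cast
    rw [show (2 : ZMod 2) = 0 by decide]
    ring

lemma odd_card_odd {ν m : ℕ} (hν : 1 ≤ ν) (n : ℤ) (x : Fin (4*m) → ZMod (2^ν))
    (hx : Tc m ν n x ∨ Tc m ν (n + 2^ν) x) (hn : Odd n) :
    Odd (Finset.univ.filter fun i => Odd ((x i).val)).card := by
  have hsum := sum_parity hν n x hx hn
  have hstep : ((∑ i, (x i).val : ℕ) : ZMod 2)
      = (((Finset.univ.filter fun i => Odd ((x i).val)).card : ℕ) : ZMod 2) := by
    rw [← Finset.sum_boole]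
    push_cast
    apply Finset.sum_congr rfl
    intro i _
    rcases Nat.even_or_odd ((x i).val) with h | h
    · rw [if_neg (by rwa [Nat.not_odd_iff_even])]
      obtain ⟨t, ht⟩ := h
      rw [ht]
      push_cast
      rw [show ((t:ZMod 2) + t) = 2 * t by ring, show (2 : ZMod 2) = 0 by decide, zero_mul]
    · rw [if_pos h]
      obtain ⟨t, ht⟩ := h
      rw [ht]
      push_cast
      rw [show (2 : ZMod 2) = 0 by decide]
      ring
  rw [hstep] at hsum
  exact (cast_two_eq_one_iff _).mp hsum

lemma even_exists {ν m : ℕ} (hν : 1 ≤ ν) (hm : 0 < m) (n : ℤ) (x : Fin (4*m) → ZMod (2^ν))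
    (hx : Tc m ν n x ∨ Tc m ν (n + 2^ν) x) (hn : Odd n) :
    (Finset.univ.filter fun i => Odd ((x i).val)).Nonempty ∧
      (Finset.univ.filter fun i => Even ((x i).val)).Nonempty := by
  have hodd := odd_card_odd hν n x hx hn
  have hOcard : (Finset.univ.filter fun i => Odd ((x i).val)).card ≠ 0 := by
    intro h; rw [h, Nat.odd_iff] at hodd; omega
  constructor
  · exact Finset.card_pos.mp (by omega)
  · classical
    have htot := Finset.card_filter_add_card_filter_not
      (s := (Finset.univ : Finset (Fin (4*m)))) (fun i => Odd ((x i).val))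
    rw [Finset.card_univ, Fintype.card_fin] at htot
    have hEeq : (Finset.univ.filter fun i => ¬ Odd ((x i).val))
        = (Finset.univ.filter fun i => Even ((x i).val)) := by
      apply Finset.filter_congr
      intro i _
      rw [Nat.not_odd_iff_even]
    rw [hEeq] at htot
    apply Finset.card_pos.mp
    rcases Nat.eq_zero_or_pos (Finset.univ.filter fun i => Even ((x i).val)).card with h | h
    · exfalso
      rw [h, add_zero] at htot
      rw [htot, Nat.odd_iff] at hodd
      omega
    · exact h

noncomputable def selO (m ν : ℕ) (hm : 0 < m) (x : Fin (4*m) → ZMod (2^ν)) :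
    Fin (4*m) × Fin (4*m) :=
  if h : (Finset.univ.filter fun i => Odd ((x i).val)).Nonempty ∧
      (Finset.univ.filter fun i => Even ((x i).val)).Nonempty
  then ((Finset.univ.filter fun i => Odd ((x i).val)).min' h.1,
        (Finset.univ.filter fun i => Even ((x i).val)).min' h.2)
  else (⟨0, by omega⟩, ⟨0, by omega⟩)

lemma selO_spec (m ν : ℕ) (hm : 0 < m) (x : Fin (4*m) → ZMod (2^ν))
    (h : (Finset.univ.filter fun i => Odd ((x i).val)).Nonempty ∧
      (Finset.univ.filter fun i => Even ((x i).val)).Nonempty) :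
    Odd ((x (selO m ν hm x).1).val) ∧ Even ((x (selO m ν hm x).2).val) := by
  unfold selO
  rw [dif_pos h]
  exact ⟨(Finset.mem_filter.mp (Finset.min'_mem _ h.1)).2,
    (Finset.mem_filter.mp (Finset.min'_mem _ h.2)).2⟩

lemma selO_congr (m ν : ℕ) (hm : 0 < m) (x y : Fin (4*m) → ZMod (2^ν))
    (hxy : ∀ i, Odd ((x i).val) ↔ Odd ((y i).val)) : selO m ν hm x = selO m ν hm y := by
  have hO : (Finset.univ.filter fun i => Odd ((x i).val))
      = (Finset.univ.filter fun i => Odd ((y i).val)) :=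
    Finset.filter_congr fun i _ => hxy i
  have hE : (Finset.univ.filter fun i => Even ((x i).val))
      = (Finset.univ.filter fun i => Even ((y i).val)) :=
    Finset.filter_congr fun i _ => by
      rw [← Nat.not_odd_iff_even, ← Nat.not_odd_iff_even]
      exact not_congr (hxy i)
  unfold selO
  simp only [hO, hE]

lemma val_add_pow_parity {ν : ℕ} (hν : 2 ≤ ν) (a : ZMod (2^ν)) :
    Odd ((a + ((2^(ν-1):ℕ) : ZMod (2^ν))).val) ↔ Odd (a.val) := by
  rw [ZMod.val_add, ZMod.val_natCast_of_lt (Nat.pow_lt_pow_right one_lt_two (by omega))]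
  rw [Nat.odd_iff, Nat.odd_iff, Nat.mod_mod_of_dvd _ (dvd_pow_self 2 (by omega : ν ≠ 0))]
  have h2 : (2:ℕ) ∣ 2^(ν-1) := dvd_pow_self 2 (by omega)
  omega

lemma step_c2 {ν m : ℕ} (hν : 2 ≤ ν) (hm : 0 < m) (n : ℤ) (hn : Odd n) :
    Nat.card {x : Fin (4*m) → ZMod (2^ν) // Tc m ν n x}
      = Nat.card {x : Fin (4*m) → ZMod (2^ν) // Tc m ν (n+2^ν) x} := by
  apply flip_card (by omega) n (selO m ν hm)
  · intro x hx
    obtain ⟨ho, he⟩ := selO_spec m ν hm x (even_exists (by omega) hm n x hx hn)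
    intro heq
    rw [heq] at ho
    exact (Nat.not_odd_iff_even.mpr he) ho
  · intro x hx
    obtain ⟨ho, he⟩ := selO_spec m ν hm x (even_exists (by omega) hm n x hx hn)
    have hp : Even ((2:ℕ)^(ν-1)) := (Nat.even_pow).mpr ⟨even_two, by omega⟩
    rcases ho with ⟨s, hs⟩
    rcases he with ⟨t, ht⟩
    rcases hp with ⟨u, hu⟩
    exact ⟨s + t + u, by omega⟩
  · intro x hx
    apply selO_congr
    intro i
    by_cases h : i = (selO m ν hm x).1 ∨ i = (selO m ν hm x).2
    · rw [if_pos h]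
      exact val_add_pow_parity hν (x i)
    · rw [if_neg h]

def idx0 (m : ℕ) (j : Fin (2*m)) : Fin (4*m) := ⟨j.val, by have := j.isLt; omega⟩
def idx1 (m : ℕ) (j : Fin (2*m)) : Fin (4*m) := ⟨2*m + j.val, by have := j.isLt; omega⟩

lemma idx0_val (m : ℕ) (j : Fin (2*m)) : (idx0 m j).val = j.val := rfl
lemma idx1_val (m : ℕ) (j : Fin (2*m)) : (idx1 m j).val = 2*m + j.val := rfl

lemma sum_pairs {m : ℕ} (F : Fin (4*m) → ℕ) :
    ∑ i, F i = ∑ j : Fin (2*m), (F (idx0 m j) + F (idx1 m j)) := by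
  have h24 : 2*m + 2*m = 4*m := by ring
  calc ∑ i, F i = ∑ i : Fin (2*m + 2*m), F (finCongr h24 i) :=
        (Fintype.sum_equiv (finCongr h24) _ F (fun i => rfl)).symm
    _ = ∑ j : Fin (2*m), F (finCongr h24 (Fin.castAdd (2*m) j))
        + ∑ j : Fin (2*m), F (finCongr h24 (Fin.natAdd (2*m) j)) := Fin.sum_univ_add _
    _ = ∑ j : Fin (2*m), (F (idx0 m j) + F (idx1 m j)) := by
        rw [← Finset.sum_add_distrib]
        apply Finset.sum_congr rfl
        intro j _
        congr 1

noncomputable def selP (m : ℕ) (hm : 0 < m) (x : Fin (4*m) → ZMod (2^1)) :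
    Fin (4*m) × Fin (4*m) :=
  if h : (Finset.univ.filter fun j : Fin (2*m) => x (idx0 m j) = x (idx1 m j)).Nonempty
  then (idx0 m ((Finset.univ.filter fun j : Fin (2*m) =>
          x (idx0 m j) = x (idx1 m j)).min' h),
        idx1 m ((Finset.univ.filter fun j : Fin (2*m) =>
          x (idx0 m j) = x (idx1 m j)).min' h))
  else (⟨0, by omega⟩, ⟨0, by omega⟩)

lemma selP_spec (m : ℕ) (hm : 0 < m) (x : Fin (4*m) → ZMod (2^1))
    (h : (Finset.univ.filter fun j : Fin (2*m) => x (idx0 m j) = x (idx1 m j)).Nonempty) :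
    ∃ j : Fin (2*m), selP m hm x = (idx0 m j, idx1 m j) ∧ x (idx0 m j) = x (idx1 m j) := by
  refine ⟨(Finset.univ.filter fun j : Fin (2*m) => x (idx0 m j) = x (idx1 m j)).min' h, ?_, ?_⟩
  · unfold selP; rw [dif_pos h]
  · exact (Finset.mem_filter.mp (Finset.min'_mem _ h)).2

lemma selP_congr (m : ℕ) (hm : 0 < m) (x y : Fin (4*m) → ZMod (2^1))
    (hxy : ∀ j : Fin (2*m), (x (idx0 m j) = x (idx1 m j)) ↔ (y (idx0 m j) = y (idx1 m j))) :
    selP m hm x = selP m hm y := by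
  have hF : (Finset.univ.filter fun j : Fin (2*m) => x (idx0 m j) = x (idx1 m j))
      = (Finset.univ.filter fun j : Fin (2*m) => y (idx0 m j) = y (idx1 m j)) :=
    Finset.filter_congr fun j _ => hxy j
  unfold selP
  simp only [hF]

lemma pairs_exists {m : ℕ} (hm : 0 < m) (n : ℤ) (hn : Odd n) (x : Fin (4*m) → ZMod (2^1))
    (hx : Tc m 1 n x ∨ Tc m 1 (n + 2^1) x) :
    (Finset.univ.filter fun j : Fin (2*m) => x (idx0 m j) = x (idx1 m j)).Nonempty := by
  by_contra h
  rw [Finset.not_nonempty_iff_eq_empty] at h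
  have hall : ∀ j : Fin (2*m), x (idx0 m j) ≠ x (idx1 m j) := by
    intro j hj
    have hmem : j ∈ (Finset.univ.filter fun j : Fin (2*m) => x (idx0 m j) = x (idx1 m j)) :=
      Finset.mem_filter.mpr ⟨Finset.mem_univ _, hj⟩
    rw [h] at hmem
    exact absurd hmem (Finset.notMem_empty j)
  have hdec : ∀ a b : ZMod (2^1), a ≠ b → a.val + b.val = 1 := by decide
  have hodd : Odd (∑ i, (x i).val) :=
    (cast_two_eq_one_iff _).mp (sum_parity (le_refl 1) n x hx hn)
  have heq : ∑ i, (x i).val = 2*m := by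
    rw [sum_pairs (fun i => (x i).val)]
    rw [Finset.sum_congr rfl (fun j _ => hdec _ _ (hall j))]
    simp [Finset.card_univ]
  rw [heq, Nat.odd_iff] at hodd
  omega

lemma step_c1 {m : ℕ} (hm : 0 < m) (n : ℤ) (hn : Odd n) :
    Nat.card {x : Fin (4*m) → ZMod (2^1) // Tc m 1 n x}
      = Nat.card {x : Fin (4*m) → ZMod (2^1) // Tc m 1 (n+2^1) x} := by
  apply flip_card (le_refl 1) n (selP m hm)
  · intro x hx
    obtain ⟨j, hsel, _⟩ := selP_spec m hm x (pairs_exists hm n hn x hx)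
    rw [hsel]
    intro heq
    have := congrArg Fin.val heq
    rw [idx0_val, idx1_val] at this
    have := j.isLt
    omega
  · intro x hx
    obtain ⟨j, hsel, hxx⟩ := selP_spec m hm x (pairs_exists hm n hn x hx)
    rw [hsel]
    dsimp only
    have hv : (x (idx0 m j)).val = (x (idx1 m j)).val := congrArg ZMod.val hxx
    exact ⟨(x (idx0 m j)).val, by simp; omega⟩
  · intro x hx
    obtain ⟨j0, hsel, hxx⟩ := selP_spec m hm x (pairs_exists hm n hn x hx)
    apply selP_congr
    intro j
    rw [hsel]
    dsimp only
    by_cases hj : j = j0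
    · subst hj
      rw [if_pos (Or.inl rfl), if_pos (Or.inr rfl)]
      exact add_left_inj _
    · have h1 : ¬(idx0 m j = idx0 m j0 ∨ idx0 m j = idx1 m j0) := by
        push_neg
        constructor <;> intro hc <;> have := congrArg Fin.val hc <;>
          rw [idx0_val] at this
        · rw [idx0_val] at this; exact hj (Fin.ext this)
        · rw [idx1_val] at this; have := j.isLt; omega
      have h2 : ¬(idx1 m j = idx0 m j0 ∨ idx1 m j = idx1 m j0) := by
        push_neg
        constructor <;> intro hc <;> have := congrArg Fin.val hc <;>
          rw [idx1_val] at this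
        · rw [idx0_val] at this; have := j0.isLt; omega
        · rw [idx1_val] at this; exact hj (Fin.ext (by omega))
      rw [if_neg h1, if_neg h2]

lemma count_linear {R : Type*} [AddCommGroup R] [Fintype R] [DecidableEq R] (j : ℕ) (c : R) :
    Nat.card {x : Fin (j+1) → R // ∑ i, x i = c} = (Fintype.card R)^j := by
  have e : {x : Fin (j+1) → R // ∑ i, x i = c} ≃ (Fin j → R) :=
  { toFun := fun x => fun i => x.1 i.succ
    invFun := fun y => ⟨Fin.cons (c - ∑ i, y i) y, by
      rw [Fin.sum_cons]; exact sub_add_cancel c _⟩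
    left_inv := fun x => by
      apply Subtype.ext
      have hx := x.2
      rw [Fin.sum_univ_succ] at hx
      have h0 : c - ∑ i : Fin j, x.1 i.succ = x.1 0 :=
        (eq_sub_of_add_eq hx).symm
      funext i
      dsimp only
      rcases Fin.eq_zero_or_eq_succ i with rfl | ⟨i', rfl⟩
      · rw [Fin.cons_zero, h0]
      · rw [Fin.cons_succ]
    right_inv := fun y => funext fun i => by simp }
  rw [Nat.card_congr e, Nat.card_eq_fintype_card, Fintype.card_fun, Fintype.card_fin]

lemma base_case {m : ℕ} (hm : 0 < m) (n : ℤ) (hn : Odd n) :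
    Nat.card {x : Fin (4*m) → ZMod (2^1) // ∑ i, (x i)^2 = (n : ZMod (2^1))}
      = 2^(1*(4*m-1)) := by
  have hsq : ∀ t : ZMod (2^1), t^2 = t := by decide
  have hn1 : ((n:ℤ) : ZMod (2^1)) = 1 := by
    obtain ⟨t, rfl⟩ := hn
    push_cast
    rw [show (2 : ZMod (2^1)) = 0 by decide]
    ring
  have hcond : ∀ x : Fin (4*m) → ZMod (2^1),
      (∑ i, (x i)^2 = (n : ZMod (2^1))) ↔ (∑ i, x i = 1) := by
    intro x
    rw [Finset.sum_congr rfl (fun i _ => hsq (x i)), hn1]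
  rw [Nat.card_congr (Equiv.subtypeEquivRight hcond)]
  obtain ⟨j, hj⟩ : ∃ j, 4*m = j+1 := ⟨4*m-1, by omega⟩
  rw [hj, count_linear j (1 : ZMod (2^1)), ZMod.card]
  norm_num

end CountSq

open CountSq in
theorem count_sum_of_squares_4m_mod_two_pow (m : ℕ) (hm : 0 < m) (n : ℤ) (hn : Odd n)
    (ν : ℕ) (hν : 1 ≤ ν) :
    Nat.card {x : Fin (4 * m) → ZMod (2 ^ ν) // ∑ i, (x i) ^ 2 = (n : ZMod (2 ^ ν))} =
      2 ^ (ν * (4 * m - 1)) := by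
  induction ν, hν using Nat.le_induction generalizing n with
  | base => exact base_case hm n hn
  | succ ν hν1 ih =>
    have hc : Nat.card {x : Fin (4*m) → ZMod (2^ν) // Tc m ν n x}
        = Nat.card {x : Fin (4*m) → ZMod (2^ν) // Tc m ν (n+2^ν) x} := by
      rcases Nat.lt_or_ge ν 2 with h | h
      · have hν1' : ν = 1 := by omega
        subst hν1'
        exact step_c1 hm n hn
      · exact step_c2 h hm n hn
    have hS := ih n hn
    rw [step_b hν1 m n, ← hc] at hS
    rw [step_a hν1 m n]
    set a := Nat.card {x : Fin (4*m) → ZMod (2^ν) // Tc m ν n x} with ha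
    set K := 4*m - 1 with hK
    have h4 : 4*m = K + 1 := by omega
    have hp : 1 ≤ ν*K := Nat.one_le_iff_ne_zero.mpr (Nat.mul_ne_zero (by omega) (by omega))
    rw [show a + a = 2*a from by ring] at hS
    obtain ⟨p, hpv⟩ : ∃ p, ν*K = p + 1 := ⟨ν*K - 1, by omega⟩
    have h2a : 2*a = 2*2^p := by
      rw [hS, hpv, pow_succ]; ring
    have ha' := Nat.eq_of_mul_eq_mul_left (by norm_num) h2a
    rw [h4, ha', ← pow_add, show (ν+1)*K = ν*K + K from by ring, hpv]
    congr 1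
    omega
end

section
/- For every prime power p^ν with p ≡ 3 (mod 4) and ν odd, the number of solutions of x² + y² ≡ 0 (mod p^ν) in (ℤ/p^νℤ)² equals p^{ν-1}; if instead ν is even, it equals p^ν; and if p ≡ 1 (mod 4), it equals p^ν(ν + 1 - ν/p). -/
lemma card_dvd_val_aux {N d : ℕ} (hN : 0 < N) (hd : d ∣ N) (hd0 : 0 < d) :
    Nat.card {x : ZMod N // d ∣ x.val} = N / d := by
  haveI : NeZero N := ⟨hN.ne'⟩
  rw [Nat.card_eq_fintype_card, Fintype.card_subtype]
  rw [show N / d = (Finset.range (N / d)).card from (Finset.card_range _).symm]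
  apply Finset.card_bij' (fun x _ => x.val / d) (fun i _ => ((d * i : ℕ) : ZMod N))
  · intro x hx
    simp only [Finset.mem_filter, Finset.mem_univ, true_and] at hx
    rw [Finset.mem_range, Nat.lt_div_iff_mul_lt' hd]
    exact (Nat.mul_div_cancel' hx).symm ▸ x.val_lt
  · intro i hi
    rw [Finset.mem_range, Nat.lt_div_iff_mul_lt' hd] at hi
    simp only [Finset.mem_filter, Finset.mem_univ, true_and]
    rw [ZMod.val_cast_of_lt hi]
    exact Dvd.intro i rfl
  · intro x hx
    simp only [Finset.mem_filter, Finset.mem_univ, true_and] at hx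
    rw [Nat.mul_div_cancel' hx, ZMod.natCast_val, ZMod.cast_id]
  · intro i hi
    rw [Finset.mem_range, Nat.lt_div_iff_mul_lt' hd] at hi
    rw [ZMod.val_cast_of_lt hi, Nat.mul_div_cancel_left _ hd0]


lemma prime_dvd_of_dvd_sq_add_sq {p : ℕ} (hp : p.Prime) (h3 : p % 4 = 3)
    {a b : ℕ} (h : p ∣ a ^ 2 + b ^ 2) : p ∣ a ∧ p ∣ b := by
  haveI : Fact p.Prime := ⟨hp⟩
  have hcast : ((a : ZMod p)) ^ 2 + (b : ZMod p) ^ 2 = 0 := by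
    have := (ZMod.natCast_eq_zero_iff (a ^ 2 + b ^ 2) p).mpr h
    push_cast at this
    exact this
  have hb : (b : ZMod p) = 0 := by
    by_contra hb
    have hsq : IsSquare (-1 : ZMod p) := by
      refine ⟨(a : ZMod p) * (b : ZMod p)⁻¹, ?_⟩
      have hbu : (b : ZMod p) * (b : ZMod p)⁻¹ = 1 := ZMod.mul_inv_of_unit _ (Ne.isUnit hb)
      have : (a : ZMod p) ^ 2 = -(b : ZMod p) ^ 2 := by linear_combination hcast
      field_simp
      linear_combination -this
    exact (ZMod.exists_sq_eq_neg_one_iff.mp hsq) h3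
  have ha : (a : ZMod p) = 0 := by
    have : (a : ZMod p) ^ 2 = 0 := by rw [hb] at hcast; linear_combination hcast
    exact pow_eq_zero_iff (n := 2) (by norm_num) |>.mp this
  exact ⟨(ZMod.natCast_eq_zero_iff a p).mp ha,
    (ZMod.natCast_eq_zero_iff b p).mp hb⟩



lemma pow_dvd_sq_add_sq_iff {p : ℕ} (hp : p.Prime) (h3 : p % 4 = 3) :
    ∀ (n a b : ℕ), p ^ n ∣ a ^ 2 + b ^ 2 ↔ p ^ ((n + 1) / 2) ∣ a ∧ p ^ ((n + 1) / 2) ∣ b := by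
  have hp0 : 0 < p := hp.pos
  intro n
  induction n using Nat.strong_induction_on with
  | _ n ih =>
    intro a b
    constructor
    · intro h
      match n, h with
      | 0, h => simpa using ⟨Nat.one_dvd a, Nat.one_dvd b⟩
      | 1, h =>
          have := prime_dvd_of_dvd_sq_add_sq hp h3 (by simpa using h)
          simpa using this
      | (n + 2), h =>
          have h1 : p ∣ a ^ 2 + b ^ 2 := dvd_trans (dvd_pow_self p (by omega)) h
          obtain ⟨ha, hb⟩ := prime_dvd_of_dvd_sq_add_sq hp h3 h1
          obtain ⟨a1, rfl⟩ := ha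
          obtain ⟨b1, rfl⟩ := hb
          have h2 : p ^ n ∣ a1 ^ 2 + b1 ^ 2 := by
            have h' : p ^ 2 * p ^ n ∣ p ^ 2 * (a1 ^ 2 + b1 ^ 2) := by
              calc p ^ 2 * p ^ n = p ^ (n + 2) := by ring
                _ ∣ (p * a1) ^ 2 + (p * b1) ^ 2 := h
                _ = p ^ 2 * (a1 ^ 2 + b1 ^ 2) := by ring
            exact (Nat.mul_dvd_mul_iff_left (pow_pos hp0 2)).mp h'
          obtain ⟨ha1, hb1⟩ := (ih n (by omega) a1 b1).mp h2
          have hm : (n + 2 + 1) / 2 = (n + 1) / 2 + 1 := by omega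
          rw [hm]
          exact ⟨by rw [pow_succ, mul_comm (p ^ _)]; exact mul_dvd_mul_left p ha1,
                 by rw [pow_succ, mul_comm (p ^ _)]; exact mul_dvd_mul_left p hb1⟩
    · rintro ⟨⟨a1, rfl⟩, ⟨b1, rfl⟩⟩
      have : (p ^ ((n+1)/2) * a1) ^ 2 + (p ^ ((n+1)/2) * b1) ^ 2
          = p ^ (2 * ((n+1)/2)) * (a1 ^ 2 + b1 ^ 2) := by rw [pow_mul]; ring
      rw [this]
      exact dvd_mul_of_dvd_left (pow_dvd_pow p (by omega)) _


lemma exists_sqrt_neg_one_pow {p : ℕ} (hp : p.Prime) (h1 : p % 4 = 1) :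
    ∀ k : ℕ, 1 ≤ k → ∃ a : ℤ, (p : ℤ) ^ k ∣ a ^ 2 + 1 := by
  haveI : Fact p.Prime := ⟨hp⟩
  have hp2 : 2 ≤ p := hp.two_le
  have hpodd : p ≠ 2 := by omega
  intro k hk
  induction k with
  | zero => omega
  | succ k ih =>
    rcases Nat.lt_or_ge 1 (k + 1) with h | h
    swap
    · -- base case k = 0
      have hk0 : k = 0 := by omega
      subst hk0
      obtain ⟨x, hx⟩ := ZMod.exists_sq_eq_neg_one_iff.mpr (by omega : p % 4 ≠ 3)
      refine ⟨(x.val : ℤ), ?_⟩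
      have hz : (((x.val : ℤ) ^ 2 + 1 : ℤ) : ZMod p) = 0 := by
        push_cast
        rw [ZMod.natCast_val, ZMod.cast_id, sq, ← hx]
        ring
      simpa [pow_one] using (ZMod.intCast_zmod_eq_zero_iff_dvd _ p).mp hz
    · -- inductive step, k ≥ 1
      obtain ⟨a, c, hc⟩ : ∃ a c : ℤ, a ^ 2 + 1 = (p : ℤ) ^ k * c := by
        obtain ⟨a, c, hc⟩ := ih (by omega)
        exact ⟨a, c, hc⟩
      have hpa : ¬ ((p : ℤ) ∣ a) := by
        intro hdvd
        have h1' : (p : ℤ) ∣ a ^ 2 + 1 := by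
          rw [hc]; exact dvd_mul_of_dvd_left (dvd_pow_self _ (by omega)) _
        have h2' : (p : ℤ) ∣ a ^ 2 := dvd_pow hdvd two_ne_zero
        have : (p : ℤ) ∣ 1 := by simpa using dvd_sub h1' h2'
        have := Int.le_of_dvd one_pos this
        omega
      have h2a : ((2 * a : ℤ) : ZMod p) ≠ 0 := by
        rw [Ne, ZMod.intCast_zmod_eq_zero_iff_dvd]
        intro hdvd
        rcases (Nat.prime_iff_prime_int.mp hp).dvd_mul.mp hdvd with h2 | ha
        · have := Int.le_of_dvd (by norm_num) h2; omega
        · exact hpa ha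
      obtain ⟨t, hdvd⟩ : ∃ t : ℤ, (p : ℤ) ∣ c + 2 * a * t := by
        refine ⟨((-((c : ZMod p) * ((2 * a : ℤ) : ZMod p)⁻¹)).val : ℤ), ?_⟩
        rw [← ZMod.intCast_zmod_eq_zero_iff_dvd]
        push_cast
        rw [ZMod.natCast_val, ZMod.cast_id]
        have h2 : ((2 : ZMod p) * (a : ZMod p)) = ((2 * a : ℤ) : ZMod p) := by push_cast; ring
        have h2a' : (2 : ZMod p) * (a : ZMod p) ≠ 0 := by rw [h2]; exact h2a
        rw [h2]
        field_simp
        ring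
      refine ⟨a + (p : ℤ) ^ k * t, ?_⟩
      have expand : (a + (p : ℤ) ^ k * t) ^ 2 + 1
          = (p : ℤ) ^ k * (c + 2 * a * t) + ((p : ℤ) ^ k) ^ 2 * t ^ 2 := by
        linear_combination hc
      rw [expand]
      refine dvd_add ?_ ?_
      · rw [pow_succ]
        exact mul_dvd_mul_left _ hdvd
      · rw [← pow_mul]
        exact dvd_mul_of_dvd_left (pow_dvd_pow _ (by omega)) _


lemma filter_dvd_range_pow {p n : ℕ} (hp : 0 < p) :
    (Finset.range (p ^ (n + 1))).filter (fun u => p ∣ u)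
      = (Finset.range (p ^ n)).image (fun w => p * w) := by
  ext x
  simp only [Finset.mem_filter, Finset.mem_range, Finset.mem_image]
  constructor
  · rintro ⟨hx, w, rfl⟩
    exact ⟨w, by rw [pow_succ, mul_comm (p ^ n)] at hx; exact lt_of_mul_lt_mul_left hx (by omega), rfl⟩
  · rintro ⟨w, hw, rfl⟩
    exact ⟨by rw [pow_succ, mul_comm (p ^ n)]; exact (Nat.mul_lt_mul_left hp).mpr hw, ⟨w, rfl⟩⟩

lemma sum_gcd_pow {p : ℕ} (hp : p.Prime) :
    ∀ n : ℕ, (∑ u ∈ Finset.range (p ^ n), Nat.gcd (p ^ n) u) + n * p ^ (n - 1)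
      = (n + 1) * p ^ n := by
  have hp0 : 0 < p := hp.pos
  intro n
  induction n with
  | zero => simp
  | succ n ih =>
    set S : ℕ → ℕ := fun m => ∑ u ∈ Finset.range (p ^ m), Nat.gcd (p ^ m) u with hS
    have hsplit : S (n + 1)
        = (∑ u ∈ (Finset.range (p ^ (n+1))).filter (fun u => p ∣ u), Nat.gcd (p ^ (n+1)) u)
          + ∑ u ∈ (Finset.range (p ^ (n+1))).filter (fun u => ¬ p ∣ u), Nat.gcd (p ^ (n+1)) u := by
      rw [hS]; exact (Finset.sum_filter_add_sum_filter_not _ _ _).symm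
    have hmult : (∑ u ∈ (Finset.range (p ^ (n+1))).filter (fun u => p ∣ u), Nat.gcd (p ^ (n+1)) u)
        = p * S n := by
      rw [filter_dvd_range_pow hp0, Finset.sum_image (by
        intro x _ y _ h; exact Nat.eq_of_mul_eq_mul_left hp0 h)]
      rw [hS, Finset.mul_sum]
      refine Finset.sum_congr rfl fun w _ => ?_
      rw [pow_succ, mul_comm (p ^ n) p, Nat.gcd_mul_left]
    have hnon : (∑ u ∈ (Finset.range (p ^ (n+1))).filter (fun u => ¬ p ∣ u), Nat.gcd (p ^ (n+1)) u)
        = ((Finset.range (p ^ (n+1))).filter (fun u => ¬ p ∣ u)).card := by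
      rw [Finset.card_eq_sum_ones]
      refine Finset.sum_congr rfl fun u hu => ?_
      simp only [Finset.mem_filter] at hu
      exact Nat.Coprime.pow_left _ ((Nat.Prime.coprime_iff_not_dvd hp).mpr hu.2)
    have hcard : ((Finset.range (p ^ (n+1))).filter (fun u => p ∣ u)).card = p ^ n := by
      rw [filter_dvd_range_pow hp0,
        Finset.card_image_of_injective _ (fun x y h => Nat.eq_of_mul_eq_mul_left hp0 h),
        Finset.card_range]
    have hcards : ((Finset.range (p ^ (n+1))).filter (fun u => p ∣ u)).card
        + ((Finset.range (p ^ (n+1))).filter (fun u => ¬ p ∣ u)).card = p ^ (n+1) := by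
      rw [Finset.card_filter_add_card_filter_not, Finset.card_range]
    -- so S(n+1) + p^n = p * S n + p^(n+1)
    have key : S (n+1) + p ^ n = p * S n + p ^ (n+1) := by
      rw [hsplit, hmult, hnon]
      omega
    -- combine with ih
    have h1 : p * (n * p ^ (n - 1)) = n * p ^ n := by
      cases n with
      | zero => simp
      | succ m => simp only [Nat.add_sub_cancel]; ring
    have h2 : p * (S n + n * p ^ (n - 1)) = p * ((n + 1) * p ^ n) := by rw [ih]
    have : S (n+1) + (n+1) * p ^ n = (S (n+1) + p ^ n) + n * p ^ n := by ring
    rw [Nat.add_sub_cancel]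
    calc S (n+1) + (n + 1) * p ^ (n+1-1) = (S (n+1) + p ^ n) + n * p ^ n := by
            simp only [Nat.add_sub_cancel]; ring
      _ = p * S n + p ^ (n+1) + p * (n * p ^ (n-1)) := by rw [key, h1]
      _ = p * (S n + n * p ^ (n-1)) + p ^ (n+1) := by ring
      _ = p * ((n + 1) * p ^ n) + p ^ (n+1) := by rw [ih]
      _ = (n + 1 + 1) * p ^ (n + 1) := by ring



lemma card_annihilator {N : ℕ} (hN : 0 < N) (u : ZMod N) :
    Nat.card {v : ZMod N // u * v = 0} = Nat.gcd N u.val := by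
  haveI : NeZero N := ⟨hN.ne'⟩
  set g := Nat.gcd N u.val with hg
  have hgN : g ∣ N := Nat.gcd_dvd_left _ _
  have hgu : g ∣ u.val := Nat.gcd_dvd_right _ _
  have hg0 : 0 < g := Nat.gcd_pos_of_pos_left _ hN
  have hiff : ∀ v : ZMod N, u * v = 0 ↔ (N / g) ∣ v.val := by
    intro v
    have hcast : u * v = ((u.val * v.val : ℕ) : ZMod N) := by
      push_cast
      rw [ZMod.natCast_val, ZMod.natCast_val, ZMod.cast_id, ZMod.cast_id]
    rw [hcast, ZMod.natCast_eq_zero_iff]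
    constructor
    · rintro ⟨k, hk⟩
      have hco : Nat.Coprime (N / g) (u.val / g) := Nat.coprime_div_gcd_div_gcd hg0
      refine hco.dvd_of_dvd_mul_left ⟨k, ?_⟩
      have : g * (u.val / g * v.val) = g * (N / g * k) := by
        rw [← Nat.mul_assoc, ← Nat.mul_assoc, Nat.mul_div_cancel' hgu, Nat.mul_div_cancel' hgN, hk]
      exact Nat.eq_of_mul_eq_mul_left hg0 this
    · rintro ⟨w, hw⟩
      refine ⟨u.val / g * w, ?_⟩
      rw [hw]
      have heq : u.val * (N / g) = N * (u.val / g) := by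
        apply Nat.eq_of_mul_eq_mul_left hg0
        rw [mul_left_comm, Nat.mul_div_cancel' hgN, mul_left_comm, Nat.mul_div_cancel' hgu,
          mul_comm]
      rw [← Nat.mul_assoc, heq, Nat.mul_assoc]
  rw [Nat.card_congr (Equiv.subtypeEquivRight hiff), card_dvd_val_aux hN
    (Nat.div_dvd_of_dvd hgN) (Nat.div_pos (Nat.le_of_dvd hN hgN) hg0),
    Nat.div_div_self hgN hN.ne']


lemma count_case3 (p : ℕ) (hp : p.Prime) (ν : ℕ) (hν : 1 ≤ ν) (h3 : p % 4 = 3) :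
    Nat.card {q : ZMod (p ^ ν) × ZMod (p ^ ν) // q.1 ^ 2 + q.2 ^ 2 = 0}
      = p ^ (ν - (ν + 1) / 2) * p ^ (ν - (ν + 1) / 2) := by
  have hp0 : 0 < p := hp.pos
  have hN : 0 < p ^ ν := pow_pos hp0 ν
  haveI : NeZero (p ^ ν) := ⟨hN.ne'⟩
  set m := (ν + 1) / 2 with hm
  have hmν : m ≤ ν := by omega
  have hcond : ∀ q : ZMod (p ^ ν) × ZMod (p ^ ν),
      q.1 ^ 2 + q.2 ^ 2 = 0 ↔ p ^ m ∣ q.1.val ∧ p ^ m ∣ q.2.val := by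
    intro q
    have hcast : q.1 ^ 2 + q.2 ^ 2 = ((q.1.val ^ 2 + q.2.val ^ 2 : ℕ) : ZMod (p ^ ν)) := by
      push_cast
      rw [ZMod.natCast_val, ZMod.natCast_val, ZMod.cast_id, ZMod.cast_id]
    rw [hcast, ZMod.natCast_eq_zero_iff]
    exact pow_dvd_sq_add_sq_iff hp h3 ν _ _
  rw [Nat.card_congr ((Equiv.subtypeEquivRight hcond).trans
      (@Equiv.subtypeProdEquivProd (ZMod (p ^ ν)) (ZMod (p ^ ν))
        (fun a => p ^ m ∣ a.val) (fun b => p ^ m ∣ b.val))),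
    Nat.card_prod, card_dvd_val_aux hN (pow_dvd_pow p hmν) (pow_pos hp0 m),
    Nat.pow_div hmν hp0]

lemma count_case1 (p : ℕ) (hp : p.Prime) (hodd : p ≠ 2)
    (ν : ℕ) (hν : 1 ≤ ν) (h1 : p % 4 = 1) :
    Nat.card {q : ZMod (p ^ ν) × ZMod (p ^ ν) // q.1 ^ 2 + q.2 ^ 2 = 0}
      + ν * p ^ (ν - 1) = (ν + 1) * p ^ ν := by
  have hp0 : 0 < p := hp.pos
  have hN : 0 < p ^ ν := pow_pos hp0 ν
  haveI : NeZero (p ^ ν) := ⟨hN.ne'⟩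
  set N := p ^ ν with hNdef
  obtain ⟨a, ha⟩ := exists_sqrt_neg_one_pow hp h1 ν hν
  set θ : ZMod N := ((a : ℤ) : ZMod N) with hθdef
  have hθ : θ ^ 2 = -1 := by
    have hz : ((a ^ 2 + 1 : ℤ) : ZMod N) = 0 := by
      rw [ZMod.intCast_zmod_eq_zero_iff_dvd]
      exact_mod_cast ha
    push_cast at hz
    linear_combination hz
  have h2u : IsUnit (2 : ZMod N) := by
    have : ((2 : ℕ) : ZMod N) = (2 : ZMod N) := by norm_num
    rw [← this, ZMod.isUnit_iff_coprime]
    exact ((Nat.coprime_primes Nat.prime_two hp).mpr (Ne.symm hodd)).pow_right ν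
  have hθu : IsUnit θ := ⟨⟨θ, -θ, by linear_combination -hθ, by linear_combination -hθ⟩, rfl⟩
  have hc : (2 : ZMod N) * (2 : ZMod N)⁻¹ = 1 := ZMod.mul_inv_of_unit _ h2u
  have hd : θ * θ⁻¹ = 1 := ZMod.mul_inv_of_unit _ hθu
  set c := (2 : ZMod N)⁻¹
  set d := θ⁻¹
  let e : (ZMod N × ZMod N) ≃ (ZMod N × ZMod N) :=
    { toFun := fun q => (q.1 + θ * q.2, q.1 - θ * q.2)
      invFun := fun q => (c * (q.1 + q.2), c * d * (q.1 - q.2))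
      left_inv := by
        rintro ⟨x, y⟩
        ext
        · show c * ((x + θ * y) + (x - θ * y)) = x
          linear_combination x * hc
        · show c * d * ((x + θ * y) - (x - θ * y)) = y
          linear_combination (d * θ * y) * hc + y * hd
      right_inv := by
        rintro ⟨u, v⟩
        ext
        · show c * (u + v) + θ * (c * d * (u - v)) = u
          linear_combination u * hc + (c * (u - v)) * hd
        · show c * (u + v) - θ * (c * d * (u - v)) = v
          linear_combination v * hc - (c * (u - v)) * hd }
  have hiff : ∀ q : ZMod N × ZMod N, q.1 ^ 2 + q.2 ^ 2 = 0 ↔ (e q).1 * (e q).2 = 0 := by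
    rintro ⟨x, y⟩
    have : (x + θ * y) * (x - θ * y) = x ^ 2 + y ^ 2 := by linear_combination (-(y^2)) * hθ
    show x ^ 2 + y ^ 2 = 0 ↔ (x + θ * y) * (x - θ * y) = 0
    rw [this]
  rw [Nat.card_congr ((Equiv.subtypeEquiv e hiff).trans
    (Equiv.subtypeProdEquivSigmaSubtype (fun u v : ZMod N => u * v = 0)))]
  rw [Nat.card_eq_fintype_card, Fintype.card_sigma]
  have hterm : ∀ u : ZMod N, Fintype.card {v : ZMod N // u * v = 0} = Nat.gcd N u.val := by
    intro u
    rw [← Nat.card_eq_fintype_card, card_annihilator hN u]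
  simp only [hterm]
  have hsum : ∑ u : ZMod N, Nat.gcd N u.val = ∑ i ∈ Finset.range N, Nat.gcd N i := by
    apply Finset.sum_bij' (fun (u : ZMod N) _ => u.val) (fun i _ => (i : ZMod N))
    · intro u _; exact Finset.mem_range.mpr u.val_lt
    · intro i _; exact Finset.mem_univ _
    · intro u _; rw [ZMod.natCast_val, ZMod.cast_id]
    · intro i hi; exact ZMod.val_cast_of_lt (Finset.mem_range.mp hi)
    · intro u _; rfl
  rw [hsum, hNdef]
  exact sum_gcd_pow hp ν

theorem count_x2_add_y2_zero_prime_pow (p : ℕ) (hp : p.Prime) (hodd : p ≠ 2)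
    (ν : ℕ) (hν : 1 ≤ ν) :
    ((p % 4 = 3 ∧ Odd ν) →
        Nat.card {q : ZMod (p ^ ν) × ZMod (p ^ ν) // q.1 ^ 2 + q.2 ^ 2 = 0} = p ^ (ν - 1)) ∧
      ((p % 4 = 3 ∧ Even ν) →
        Nat.card {q : ZMod (p ^ ν) × ZMod (p ^ ν) // q.1 ^ 2 + q.2 ^ 2 = 0} = p ^ ν) ∧
      (p % 4 = 1 →
        (Nat.card {q : ZMod (p ^ ν) × ZMod (p ^ ν) // q.1 ^ 2 + q.2 ^ 2 = 0} : ℝ) =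
          (p : ℝ) ^ ν * (ν + 1 - ν / p)) := by
  refine ⟨?_, ?_, ?_⟩
  · rintro ⟨h3, hνodd⟩
    rw [count_case3 p hp ν hν h3, ← pow_add]
    congr 1
    obtain ⟨k, hk⟩ := hνodd
    omega
  · rintro ⟨h3, hνeven⟩
    rw [count_case3 p hp ν hν h3, ← pow_add]
    congr 1
    obtain ⟨k, hk⟩ := hνeven
    omega
  · intro h1
    have key := count_case1 p hp hodd ν hν h1
    have hkey : (Nat.card {q : ZMod (p ^ ν) × ZMod (p ^ ν) // q.1 ^ 2 + q.2 ^ 2 = 0} : ℝ)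
        + (ν : ℝ) * (p : ℝ) ^ (ν - 1) = ((ν : ℝ) + 1) * (p : ℝ) ^ ν := by
      exact_mod_cast congrArg (Nat.cast : ℕ → ℝ) key
    have hp0R : (p : ℝ) ≠ 0 := Nat.cast_ne_zero.mpr hp.pos.ne'
    have hpow : (p : ℝ) ^ ν = (p : ℝ) * (p : ℝ) ^ (ν - 1) := by
      rw [← pow_succ']
      congr 1
      omega
    calc (Nat.card {q : ZMod (p ^ ν) × ZMod (p ^ ν) // q.1 ^ 2 + q.2 ^ 2 = 0} : ℝ)
        = ((ν : ℝ) + 1) * (p : ℝ) ^ ν - (ν : ℝ) * (p : ℝ) ^ (ν - 1) := by linarith [hkey]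
      _ = (p : ℝ) ^ ν * (ν + 1 - ν / p) := by rw [hpow]; field_simp
end

section
/- For every positive integer r, the number of solutions of x² - y² ≡ 1 (mod r) in (ℤ/rℤ)² equals φ(2r), where φ is Euler's totient function. -/
set_option linter.unusedSectionVars false

section aux
variable {r : ℕ} [NeZero r]

private lemma zmod_val_natCast_eq (z : ZMod r) : ((z.val : ℕ) : ZMod r) = z := by
  rw [ZMod.natCast_val, ZMod.cast_id]

private lemma unit_val_odd (he : Even r) (u : (ZMod r)ˣ) : Odd ((u : ZMod r).val) := by
  have hc := ZMod.val_coe_unit_coprime u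
  rw [Nat.odd_iff]
  by_contra h
  have h2 : 2 ∣ (u : ZMod r).val := Nat.dvd_of_mod_eq_zero (by omega)
  have : 2 ∣ Nat.gcd ((u : ZMod r).val) r := Nat.dvd_gcd h2 he.two_dvd
  rw [hc] at this
  omega

private def halfsum (r : ℕ) [NeZero r] (u : (ZMod r)ˣ) : ZMod r :=
  ((((u : ZMod r).val + ((u⁻¹ : (ZMod r)ˣ) : ZMod r).val) / 2 : ℕ) : ZMod r)

private lemma two_mul_halfsum (he : Even r) (u : (ZMod r)ˣ) :
    2 * halfsum r u = (u : ZMod r) + ((u⁻¹ : (ZMod r)ˣ) : ZMod r) := by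
  have ha := unit_val_odd he u
  have hb := unit_val_odd he u⁻¹
  have hev : 2 ∣ ((u : ZMod r).val + ((u⁻¹ : (ZMod r)ˣ) : ZMod r).val) := by
    rcases ha with ⟨a, ha⟩; rcases hb with ⟨b, hb⟩; omega
  have : (2 : ZMod r) * halfsum r u
      = (((2 * (((u : ZMod r).val + ((u⁻¹ : (ZMod r)ˣ) : ZMod r).val) / 2)) : ℕ) : ZMod r) := by
    rw [halfsum]; push_cast; ring
  rw [this, Nat.mul_div_cancel' hev, Nat.cast_add, zmod_val_natCast_eq, zmod_val_natCast_eq]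

private lemma kernel_two (he : Even r) (z : ZMod r) (hz : 2 * z = 0) :
    z = 0 ∨ z = ((r / 2 : ℕ) : ZMod r) := by
  have hv : z.val < r := ZMod.val_lt z
  have hrpos : 0 < r := NeZero.pos r
  have h2z : ((2 * z.val : ℕ) : ZMod r) = 0 := by
    push_cast
    rw [zmod_val_natCast_eq]; exact hz
  have hdvd : r ∣ 2 * z.val := (ZMod.natCast_eq_zero_iff _ _).mp h2z
  rcases hdvd with ⟨k, hk⟩
  have hk2 : k = 0 ∨ k = 1 := by
    have h1 : r * k < r * 2 := by
      calc r * k = 2 * z.val := hk.symm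
        _ < 2 * r := by omega
        _ = r * 2 := by ring
    have := Nat.lt_of_mul_lt_mul_left h1
    omega
  rcases hk2 with h | h
  · left
    subst h
    simp only [Nat.mul_zero] at hk
    have hz0 : z.val = 0 := by omega
    rw [← zmod_val_natCast_eq z, hz0, Nat.cast_zero]
  · right
    subst h
    simp only [Nat.mul_one] at hk
    have hval : z.val = r / 2 := by rcases he with ⟨m, hm⟩; omega
    rw [← zmod_val_natCast_eq z, hval]

private lemma two_mul_half_r (he : Even r) : 2 * ((r / 2 : ℕ) : ZMod r) = 0 := by
  rw [← Nat.cast_ofNat, ← Nat.cast_mul, Nat.mul_div_cancel' he.two_dvd, ZMod.natCast_self]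

private lemma half_r_ne_zero (he : Even r) : ((r / 2 : ℕ) : ZMod r) ≠ 0 := by
  intro h0
  have hrpos : 0 < r := NeZero.pos r
  obtain ⟨m, hm⟩ := he
  have := (ZMod.natCast_eq_zero_iff (r / 2) r).mp h0
  have hle := Nat.le_of_dvd (show 0 < r / 2 by omega) this
  omega

private def mkUnit {r : ℕ} (q : {q : ZMod r × ZMod r // q.1 ^ 2 - q.2 ^ 2 = 1}) :
    (ZMod r)ˣ where
  val := q.1.1 + q.1.2
  inv := q.1.1 - q.1.2
  val_inv := by linear_combination q.2
  inv_val := by linear_combination q.2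

private lemma mkUnit_val {r : ℕ} (q : {q : ZMod r × ZMod r // q.1 ^ 2 - q.2 ^ 2 = 1}) :
    ((mkUnit q : (ZMod r)ˣ) : ZMod r) = q.1.1 + q.1.2 := rfl

private lemma mkUnit_inv {r : ℕ} (q : {q : ZMod r × ZMod r // q.1 ^ 2 - q.2 ^ 2 = 1}) :
    (((mkUnit q)⁻¹ : (ZMod r)ˣ) : ZMod r) = q.1.1 - q.1.2 := rfl

/-! ### Even case -/

private def evenF (r : ℕ) [NeZero r] (he : Even r) (p : (ZMod r)ˣ × Bool) :
    {q : ZMod r × ZMod r // q.1 ^ 2 - q.2 ^ 2 = 1} :=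
  ⟨(halfsum r p.1 + (if p.2 then ((r / 2 : ℕ) : ZMod r) else 0),
    halfsum r p.1 - ((p.1⁻¹ : (ZMod r)ˣ) : ZMod r) + (if p.2 then ((r / 2 : ℕ) : ZMod r) else 0)),
    by
      have h2c : 2 * (if p.2 then ((r / 2 : ℕ) : ZMod r) else 0) = 0 := by
        cases hb : p.2 <;> simp [two_mul_half_r he]
      have huv : (p.1 : ZMod r) * ((p.1⁻¹ : (ZMod r)ˣ) : ZMod r) = 1 := p.1.mul_inv
      have hx := two_mul_halfsum he p.1
      simp only
      linear_combination ((p.1⁻¹ : (ZMod r)ˣ) : ZMod r) * hx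
        + ((p.1⁻¹ : (ZMod r)ˣ) : ZMod r) * h2c + huv⟩

private def evenG (r : ℕ) [NeZero r] (q : {q : ZMod r × ZMod r // q.1 ^ 2 - q.2 ^ 2 = 1}) :
    (ZMod r)ˣ × Bool :=
  (mkUnit q, decide (q.1.1 ≠ halfsum r (mkUnit q)))

private lemma evenGF (r : ℕ) [NeZero r] (he : Even r) (p : (ZMod r)ˣ × Bool) :
    evenG r (evenF r he p) = p := by
  obtain ⟨u, b⟩ := p
  have h2c : 2 * (if b then ((r / 2 : ℕ) : ZMod r) else 0) = 0 := by
    cases b <;> simp [two_mul_half_r he]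
  have hu : mkUnit (evenF r he (u, b)) = u := by
    apply Units.ext
    rw [mkUnit_val]
    show (halfsum r u + (if b then ((r / 2 : ℕ) : ZMod r) else 0))
      + (halfsum r u - ((u⁻¹ : (ZMod r)ˣ) : ZMod r) + (if b then ((r / 2 : ℕ) : ZMod r) else 0))
      = (u : ZMod r)
    linear_combination two_mul_halfsum he u + h2c
  rw [evenG, hu]
  refine Prod.ext rfl ?_
  show decide ((evenF r he (u, b)).1.1 ≠ halfsum r u) = b
  have hfst : (evenF r he (u, b)).1.1
      = halfsum r u + (if b then ((r / 2 : ℕ) : ZMod r) else 0) := rfl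
  rw [hfst]
  cases b
  · simp
  · simp [half_r_ne_zero he]

private lemma evenFG (r : ℕ) [NeZero r] (he : Even r)
    (q : {q : ZMod r × ZMod r // q.1 ^ 2 - q.2 ^ 2 = 1}) :
    evenF r he (evenG r q) = q := by
  obtain ⟨⟨x, y⟩, hq⟩ := q
  set q' : {q : ZMod r × ZMod r // q.1 ^ 2 - q.2 ^ 2 = 1} := ⟨(x, y), hq⟩ with hq'
  set u : (ZMod r)ˣ := mkUnit q' with hu
  have huval : (u : ZMod r) = x + y := rfl
  have huinv : ((u⁻¹ : (ZMod r)ˣ) : ZMod r) = x - y := rfl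
  have h2x : 2 * (x - halfsum r u) = 0 := by
    have := two_mul_halfsum he u
    rw [huval, huinv] at this
    linear_combination -this
  rcases kernel_two he _ h2x with h0 | h0
  · have hxeq : halfsum r u = x := by linear_combination -h0
    have hdec : decide (q'.1.1 ≠ halfsum r u) = false :=
      decide_eq_false (by simp [hq', hxeq])
    rw [evenG, ← hu, hdec]
    apply Subtype.ext
    refine Prod.ext ?_ ?_
    · show halfsum r u + (if false then ((r / 2 : ℕ) : ZMod r) else 0) = x
      simp [hxeq]
    · show halfsum r u - ((u⁻¹ : (ZMod r)ˣ) : ZMod r)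
        + (if false then ((r / 2 : ℕ) : ZMod r) else 0) = y
      rw [huinv, hxeq]
      ring_nf
      simp
  · have hxeq : x - halfsum r u = ((r / 2 : ℕ) : ZMod r) := h0
    have hdec : decide (q'.1.1 ≠ halfsum r u) = true := by
      apply decide_eq_true
      simp only [hq', ne_eq]
      intro hcon
      exact half_r_ne_zero he (by rw [← hxeq, hcon]; ring)
    rw [evenG, ← hu, hdec]
    apply Subtype.ext
    refine Prod.ext ?_ ?_
    · show halfsum r u + (if true then ((r / 2 : ℕ) : ZMod r) else 0) = x
      simp only [if_true]
      linear_combination -hxeq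
    · show halfsum r u - ((u⁻¹ : (ZMod r)ˣ) : ZMod r)
        + (if true then ((r / 2 : ℕ) : ZMod r) else 0) = y
      rw [huinv]
      simp only [if_true]
      linear_combination -hxeq

/-! ### Odd case -/

private lemma two_mul_invtwo (ho : Odd r) :
    (2 : ZMod r) * (((r + 1) / 2 : ℕ) : ZMod r) = 1 := by
  have h2 : 2 * ((r + 1) / 2) = r + 1 := by
    rcases ho with ⟨m, hm⟩; omega
  have : (2 : ZMod r) * (((r + 1) / 2 : ℕ) : ZMod r) = ((2 * ((r + 1) / 2) : ℕ) : ZMod r) := by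
    push_cast; ring
  rw [this, h2, Nat.cast_add, ZMod.natCast_self, Nat.cast_one, zero_add]

private def oddF (r : ℕ) [NeZero r] (ho : Odd r) (u : (ZMod r)ˣ) :
    {q : ZMod r × ZMod r // q.1 ^ 2 - q.2 ^ 2 = 1} :=
  ⟨((((r + 1) / 2 : ℕ) : ZMod r) * ((u : ZMod r) + ((u⁻¹ : (ZMod r)ˣ) : ZMod r)),
    (((r + 1) / 2 : ℕ) : ZMod r) * ((u : ZMod r) - ((u⁻¹ : (ZMod r)ˣ) : ZMod r))), by
    have h1 := two_mul_invtwo (r := r) ho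
    have h2 : (u : ZMod r) * ((u⁻¹ : (ZMod r)ˣ) : ZMod r) = 1 := u.mul_inv
    simp only
    linear_combination (2 * (((r + 1) / 2 : ℕ) : ZMod r) + 1)
      * ((u : ZMod r) * ((u⁻¹ : (ZMod r)ˣ) : ZMod r)) * h1 + h2⟩

private lemma oddGF (r : ℕ) [NeZero r] (ho : Odd r) (u : (ZMod r)ˣ) :
    mkUnit (oddF r ho u) = u := by
  apply Units.ext
  rw [mkUnit_val]
  show (((r + 1) / 2 : ℕ) : ZMod r) * ((u : ZMod r) + ((u⁻¹ : (ZMod r)ˣ) : ZMod r))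
    + (((r + 1) / 2 : ℕ) : ZMod r) * ((u : ZMod r) - ((u⁻¹ : (ZMod r)ˣ) : ZMod r)) = (u : ZMod r)
  linear_combination (u : ZMod r) * two_mul_invtwo (r := r) ho

private lemma oddFG (r : ℕ) [NeZero r] (ho : Odd r)
    (q : {q : ZMod r × ZMod r // q.1 ^ 2 - q.2 ^ 2 = 1}) :
    oddF r ho (mkUnit q) = q := by
  obtain ⟨⟨x, y⟩, hq⟩ := q
  apply Subtype.ext
  refine Prod.ext ?_ ?_
  · show (((r + 1) / 2 : ℕ) : ZMod r) * ((x + y) + (x - y)) = x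
    linear_combination x * two_mul_invtwo (r := r) ho
  · show (((r + 1) / 2 : ℕ) : ZMod r) * ((x + y) - (x - y)) = y
    linear_combination y * two_mul_invtwo (r := r) ho

end aux

theorem count_x2_sub_y2_eq_one (r : ℕ) (hr : 0 < r) :
    Nat.card {q : ZMod r × ZMod r // q.1 ^ 2 - q.2 ^ 2 = 1} = Nat.totient (2 * r) := by
  haveI : NeZero r := ⟨hr.ne'⟩
  rcases Nat.even_or_odd r with he | ho
  · have hcard : Nat.card {q : ZMod r × ZMod r // q.1 ^ 2 - q.2 ^ 2 = 1}
        = Nat.card ((ZMod r)ˣ × Bool) :=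
      Nat.card_congr (Equiv.mk (evenG r) (evenF r he) (evenFG r he) (evenGF r he))
    rw [hcard, Nat.card_prod, Nat.card_eq_fintype_card, Nat.card_eq_fintype_card,
      ZMod.card_units_eq_totient, Fintype.card_bool,
      Nat.totient_mul_of_prime_of_dvd Nat.prime_two he.two_dvd]
    ring
  · have hcard : Nat.card {q : ZMod r × ZMod r // q.1 ^ 2 - q.2 ^ 2 = 1}
        = Nat.card (ZMod r)ˣ :=
      Nat.card_congr (Equiv.mk mkUnit (oddF r ho) (oddFG r ho) (oddGF r ho))
    rw [hcard, Nat.card_eq_fintype_card, ZMod.card_units_eq_totient,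
      Nat.totient_mul (Nat.coprime_two_left.mpr ho), Nat.totient_two, one_mul]
end
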